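/- With U₃ as defined (the 3×3 matrix with rows ((1/2)e^{iπ/9}, -i/2, 1/√2), ((√3/2)e^{2iπ/9}, (i/(2√3))e^{iπ/9}, -(1/√6)e^{iπ/9}), (0, √(2/3)e^{-2iπ/9}, -(i/√3)e^{-2iπ/9})) and v₀=(1,0,0), v₁=((1/2)e^{iπ/9},(√3/2)e^{2iπ/9},0), v₂=((1/2)e^{-iπ/9}, i/2, 1/√2), we have U₃v₀ = v₁, U₃v₁ = v₂, and U₃v₂ = v₀. -/

import Mathlib

open Matrix Complex

noncomputable def U₃ : Matrix (Fin 3) (Fin 3) ℂ :=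
  !![(1 / 2 : ℂ) * Complex.exp (Real.pi * Complex.I / 9),
       -Complex.I / 2,
       ((Real.sqrt 2 : ℂ))⁻¹;
     ((Real.sqrt 3 : ℂ) / 2) * Complex.exp (2 * Real.pi * Complex.I / 9),
       (Complex.I / (2 * (Real.sqrt 3 : ℂ))) * Complex.exp (Real.pi * Complex.I / 9),
       -((Real.sqrt 6 : ℂ))⁻¹ * Complex.exp (Real.pi * Complex.I / 9);
     0,
       (Real.sqrt (2 / 3) : ℂ) * Complex.exp (-(2 * Real.pi * Complex.I / 9)),
       -(Complex.I / (Real.sqrt 3 : ℂ)) * Complex.exp (-(2 * Real.pi * Complex.I / 9))]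

noncomputable def v₀ : Fin 3 → ℂ := ![1, 0, 0]
noncomputable def v₁ : Fin 3 → ℂ :=
  ![(1 / 2 : ℂ) * Complex.exp (Real.pi * Complex.I / 9),
    ((Real.sqrt 3 : ℂ) / 2) * Complex.exp (2 * Real.pi * Complex.I / 9), 0]
noncomputable def v₂ : Fin 3 → ℂ :=
  ![(1 / 2 : ℂ) * Complex.exp (-(Real.pi * Complex.I / 9)),
    Complex.I / 2, ((Real.sqrt 2 : ℂ))⁻¹]

set_option maxHeartbeats 1000000 in
theorem stmt14 :
    U₃.mulVec v₀ = v₁ ∧ U₃.mulVec v₁ = v₂ ∧ U₃.mulVec v₂ = v₀ := by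
  have ha2 : Complex.exp (2 * Real.pi * Complex.I / 9)
      = Complex.exp (Real.pi * Complex.I / 9) * Complex.exp (Real.pi * Complex.I / 9) := by
    rw [← Complex.exp_add]; ring_nf
  have han : Complex.exp (-(Real.pi * Complex.I / 9))
      = (Complex.exp (Real.pi * Complex.I / 9))⁻¹ := by
    rw [← Complex.exp_neg]
  have han2 : Complex.exp (-(2 * Real.pi * Complex.I / 9))
      = (Complex.exp (Real.pi * Complex.I / 9))⁻¹ * (Complex.exp (Real.pi * Complex.I / 9))⁻¹ := by
    have h : -(2 * (Real.pi:ℂ) * Complex.I / 9)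
        = -((Real.pi:ℂ) * Complex.I / 9) + -((Real.pi:ℂ) * Complex.I / 9) := by ring
    rw [h, Complex.exp_add, han]
  set a := Complex.exp (Real.pi * Complex.I / 9) with ha_def
  have ha0 : a ≠ 0 := Complex.exp_ne_zero _
  have ha3 : a ^ 3 = 1 / 2 + (Real.sqrt 3 : ℂ) / 2 * Complex.I := by
    rw [ha_def, ← Complex.exp_nat_mul]
    have : ((3:ℕ) : ℂ) * ((Real.pi : ℂ) * Complex.I / 9) = ((Real.pi / 3 : ℝ) : ℂ) * Complex.I := by
      push_cast; ring
    rw [this, Complex.exp_mul_I, ← Complex.ofReal_cos, ← Complex.ofReal_sin,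
      Real.cos_pi_div_three, Real.sin_pi_div_three]
    push_cast; ring
  have s2 : (Real.sqrt 2 : ℂ) * (Real.sqrt 2 : ℂ) = 2 := by
    rw [← Complex.ofReal_mul, Real.mul_self_sqrt (by norm_num)]; norm_num
  have s3 : (Real.sqrt 3 : ℂ) * (Real.sqrt 3 : ℂ) = 3 := by
    rw [← Complex.ofReal_mul, Real.mul_self_sqrt (by norm_num)]; norm_num
  have s6 : (Real.sqrt 6 : ℂ) = (Real.sqrt 2 : ℂ) * (Real.sqrt 3 : ℂ) := by
    rw [← Complex.ofReal_mul, show (6:ℝ) = 2 * 3 by norm_num, Real.sqrt_mul (by norm_num)]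
  have s23 : (Real.sqrt (2/3) : ℂ) = (Real.sqrt 2 : ℂ) / (Real.sqrt 3 : ℂ) := by
    have : Real.sqrt (2/3) = Real.sqrt 2 / Real.sqrt 3 := by rw [Real.sqrt_div']; norm_num
    rw [this]; push_cast; ring
  have h2 : (Real.sqrt 2 : ℂ) ≠ 0 := by
    simpa using (Real.sqrt_ne_zero' ).2 (by norm_num : (0:ℝ) < 2)
  have h3 : (Real.sqrt 3 : ℂ) ≠ 0 := by
    simpa using (Real.sqrt_ne_zero' ).2 (by norm_num : (0:ℝ) < 3)
  have hI : Complex.I * Complex.I = -1 := Complex.I_mul_I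
  refine ⟨?_, ?_, ?_⟩ <;> funext i <;> fin_cases i <;>
    simp [U₃, v₀, v₁, v₂, Matrix.mulVec, dotProduct, Fin.sum_univ_three, ha2, han, han2,
      s6, s23, ← ha_def, ]
  · field_simp
    linear_combination (2 - 2*(Real.sqrt 3:ℂ)*Complex.I + (-1 + Complex.I*(Real.sqrt 3:ℂ))) * ha3 + (1 + Complex.I^2/2) * s3
      + (-(Real.sqrt 3:ℂ)*(Real.sqrt 3:ℂ) + 3/2) * hI
  · field_simp
    linear_combination (8*(Real.sqrt 3:ℂ)*((Real.sqrt 3:ℂ)+Complex.I)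
        + ((Real.sqrt 3:ℂ) - 8*(Real.sqrt 3:ℂ)*Complex.I - 8*(Real.sqrt 3:ℂ)^2 + Complex.I)) * ha3
      + (4*(Real.sqrt 3:ℂ)*Complex.I + (Complex.I/2 - 4*(Real.sqrt 3:ℂ)*Complex.I)) * s3
      + (4*(Real.sqrt 3:ℂ)*(Real.sqrt 3:ℂ) + (-4*(Real.sqrt 3:ℂ)^2 + (Real.sqrt 3:ℂ)/2)) * hI
  · field_simp
    linear_combination s2
  · rw [show ((Real.sqrt 2:ℂ))⁻¹ * ((Real.sqrt 2:ℂ))⁻¹ = 2⁻¹ by rw [← mul_inv, s2]]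
    field_simp
    linear_combination -hI
  · field_simp
    linear_combination ((4*(Real.sqrt 3:ℂ)^2-4)*a^2*(Real.sqrt 3:ℂ)
        + (a*(Real.sqrt 3:ℂ)^2 + a*Complex.I^2 - 4*a^2*(Real.sqrt 3:ℂ)*Complex.I^2 - 4*a^2*(Real.sqrt 3:ℂ)^3))*s2
      + (4*a^2*(Real.sqrt 3:ℂ)*(Real.sqrt 2:ℂ)^2 + (2*a - 8*a^2*(Real.sqrt 3:ℂ)))*hI
      + (8*(Real.sqrt 3:ℂ)*a^2 + (2*a - 8*a^2*(Real.sqrt 3:ℂ)))*s3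
  · field_simp
    linear_combination (Complex.I*(Real.sqrt 3:ℂ)*a^2 + (Complex.I - Complex.I*(Real.sqrt 3:ℂ)*a^2))*s2
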